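/- Let α : ℝ → ℝ be continuous with antiderivative A(t) = ∫₀ᵗ α(s) ds nonvanishing on an open interval I, and let f : ℝ → ℝ be three times continuously differentiable and satisfy -4f(ζ) + ζ·f'(ζ) + f(ζ)·f'''(ζ) − c₅·f(ζ)·f'(ζ) + c₆·f'(ζ)·f''(ζ) = 0 for all ζ ∈ ℝ. Define u(x,t) = A(t)^{-4}·f(x·A(t)) on ℝ × I, β(t) = −c₅·A(t)²·α(t), δ(t) = c₆·α(t). Then u satisfies u_t + α(t)·u·u_{xxx} + δ(t)·u_x·u_{xx} + β(t)·u·u_x = 0 on ℝ × I. -/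

import Mathlib

lemma spatial_iter (f : ℝ → ℝ) (hf : ContDiff ℝ 3 f) (C k : ℝ) (n : ℕ) (hn : (n : WithTop ℕ∞) ≤ 3) (x : ℝ) :
    iteratedDeriv n (fun y => C * f (y * k)) x = C * (k ^ n * iteratedDeriv n f (x * k)) := by
  have hgen : (fun y => C * f (y * k)) = fun y => C * (fun z => f (k * z)) y := by
    funext y; rw [mul_comm y k]
  have hck : ContDiff ℝ n (fun z => f (k * z)) :=
    (hf.of_le hn).comp (contDiff_const.mul contDiff_id)
  rw [hgen, ← iteratedDerivWithin_univ,
    iteratedDerivWithin_const_mul (Set.mem_univ x) uniqueDiffOn_univ C hck.contDiffWithinAt,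
    iteratedDerivWithin_univ, iteratedDeriv_comp_const_mul (hf.of_le hn) k, mul_comm x k]

theorem stmt_14 (α : ℝ → ℝ) (hα : Continuous α)
    (A : ℝ → ℝ) (hA : A = fun t => ∫ s in (0:ℝ)..t, α s)
    (a b : ℝ) (hA0 : ∀ t ∈ Set.Ioo a b, A t ≠ 0)
    (c₅ c₆ : ℝ)
    (f : ℝ → ℝ) (hf : ContDiff ℝ 3 f)
    (hode : ∀ ζ : ℝ,
      -4 * f ζ + ζ * deriv f ζ + f ζ * iteratedDeriv 3 f ζ
        - c₅ * f ζ * deriv f ζ + c₆ * deriv f ζ * iteratedDeriv 2 f ζ = 0)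
    (u : ℝ → ℝ → ℝ) (hu : u = fun x t => ((A t) ^ 4)⁻¹ * f (x * A t))
    (β δ : ℝ → ℝ)
    (hβ : β = fun t => -c₅ * (A t) ^ 2 * α t)
    (hδ : δ = fun t => c₆ * α t) :
    ∀ x : ℝ, ∀ t ∈ Set.Ioo a b,
      deriv (fun τ => u x τ) t
        + α t * u x t * iteratedDeriv 3 (fun y => u y t) x
        + δ t * deriv (fun y => u y t) x * iteratedDeriv 2 (fun y => u y t) x
        + β t * u x t * deriv (fun y => u y t) x = 0 := by
  intro x t ht
  have ha := hA0 t ht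
  set k := A t with hk
  -- time derivative
  have hAt : HasDerivAt A (α t) t := by
    rw [hA]; exact (hα.integral_hasStrictDerivAt 0 t).hasDerivAt
  have hfx : HasDerivAt (fun τ => f (x * A τ)) (deriv f (x * k) * (x * α t)) t := by
    have h1 : HasDerivAt (fun τ => x * A τ) (x * α t) t := hAt.const_mul x
    exact ((hf.differentiable (by norm_num) (x * k)).hasDerivAt).comp t h1
  have hinv : HasDerivAt (fun τ => ((A τ) ^ 4)⁻¹)
      (-(4 * k ^ 3 * α t) / (k ^ 4) ^ 2) t := by
    have := (hAt.fun_pow 4).fun_inv (pow_ne_zero 4 ha)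
    simpa [hk] using this
  have hut : HasDerivAt (fun τ => u x τ)
      ((-(4 * k ^ 3 * α t) / (k ^ 4) ^ 2) * f (x * k)
        + ((k ^ 4)⁻¹) * (deriv f (x * k) * (x * α t))) t := by
    rw [hu]; exact hinv.mul hfx
  have hdt := hut.deriv
  -- spatial derivatives
  have hsp : (fun y => u y t) = fun y => ((k:ℝ) ^ 4)⁻¹ * f (y * k) := by
    rw [hu]
  have h1 : deriv (fun y => u y t) x = (k ^ 4)⁻¹ * (k ^ 1 * iteratedDeriv 1 f (x * k)) := by
    rw [hsp, ← iteratedDeriv_one]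
    exact spatial_iter f hf _ k 1 (by norm_num) x
  have h2 : iteratedDeriv 2 (fun y => u y t) x
      = (k ^ 4)⁻¹ * (k ^ 2 * iteratedDeriv 2 f (x * k)) := by
    rw [hsp]; exact spatial_iter f hf _ k 2 (by norm_num) x
  have h3 : iteratedDeriv 3 (fun y => u y t) x
      = (k ^ 4)⁻¹ * (k ^ 3 * iteratedDeriv 3 f (x * k)) := by
    rw [hsp]; exact spatial_iter f hf _ k 3 (by norm_num) x
  have hux : u x t = (k ^ 4)⁻¹ * f (x * k) := by rw [hu]
  rw [hdt, h1, h2, h3, hux, iteratedDeriv_one]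
  simp only [hβ, hδ, ← hk]
  have hO := hode (x * k)
  field_simp
  rw [mul_comm x k] at hO
  linear_combination (α t) * hO
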